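/- Fix k, r, n ∈ ℕ and M : Fin k → ℕ with M_i ≥ 1 for every i, and suppose n ≥ Σ_i M_i. Then, working in ℚ, the sum over all pairs (m, p), where m : Fin k → ℕ satisfies m_i ≥ M_i for every i, p : Fin r → ℕ satisfies p_j ≥ 1 for every j, and Σ_i m_i + Σ_j p_j ≤ n, of the product Π_{i<k} C(m_i − 1, M_i − 1) · Π_{j<r} 1/p_j (with C the binomial coefficient), equals (r! / (n − Σ_i M_i)!) · c_{|M|+1}(n + 1, r + |M| + 1), where |M| = Σ_i M_i. -/

import Mathlib

/-- Unsigned `r`-Stirling numbers of the first kind, defined by the recurrence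
`c_r(n,k) = (n-1)·c_r(n-1,k) + c_r(n-1,k-1)` for `n > r`, `k > 0`, with boundary
conditions `c_r(r,k) = δ_{r,k}`, `c_r(n,k) = 0` for `n < r`, and `c_r(n,0) = 0`
for `n > r`. -/
def rStirlingFirst (r : ℕ) : ℕ → ℕ → ℕ
  | 0, k => if r = 0 then (if k = 0 then 1 else 0) else 0
  | n + 1, k =>
    if n + 1 < r then 0
    else if n + 1 = r then (if k = r then 1 else 0)
    else
      match k with
      | 0 => 0
      | k' + 1 => n * rStirlingFirst r n (k' + 1) + rStirlingFirst r n k'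

open Finset



/-- Sum over compositions of `b` into `r` positive parts of the product of reciprocals. -/
def Bfun : ℕ → ℕ → ℚ
  | 0, b => if b = 0 then 1 else 0
  | r + 1, b => ∑ p ∈ Finset.Icc 1 b, (1 / (p : ℚ)) * Bfun r (b - p)

lemma Bfun_zero (r : ℕ) : Bfun r 0 = if r = 0 then 1 else 0 := by
  cases r <;> simp [Bfun]

/-- reindexing `p = b - c`. -/
lemma sum_Icc_one_reflect (h : ℕ → ℚ) (b : ℕ) :
    ∑ p ∈ Icc 1 b, h (b - p) = ∑ c ∈ range b, h c := by
  apply Finset.sum_nbij' (i := fun p => b - p) (j := fun c => b - c) <;>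
    simp_all <;> omega

lemma Klem (r : ℕ) : ∀ b : ℕ, ∑ p ∈ Icc 1 b, (1 / (p : ℚ)) * (∑ c ∈ range (b - p), Bfun r c)
    = ∑ c ∈ range b, Bfun (r + 1) c := by
  intro b
  induction b with
  | zero => simp
  | succ b ih =>
    rw [Finset.sum_range_succ, ← ih, Finset.sum_Icc_succ_top (by omega)]
    have h1 : ∀ p ∈ Icc 1 b, (1 / (p:ℚ)) * (∑ c ∈ range (b + 1 - p), Bfun r c)
        = (1 / (p:ℚ)) * (∑ c ∈ range (b - p), Bfun r c) + (1 / (p:ℚ)) * Bfun r (b - p) := by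
      intro p hp
      simp only [mem_Icc] at hp
      have : b + 1 - p = (b - p) + 1 := by omega
      rw [this, Finset.sum_range_succ]; ring
    rw [Finset.sum_congr rfl h1, Finset.sum_add_distrib]
    simp [Bfun]

lemma L1' (r : ℕ) : ∀ b : ℕ, (b : ℚ) * Bfun (r + 1) b = (r + 1) * ∑ c ∈ range b, Bfun r c := by
  induction r with
  | zero =>
    intro b
    cases b with
    | zero => simp
    | succ b =>
      have h1 : Bfun 1 (b + 1) = 1 / ((b:ℚ) + 1) := by
        rw [show (1 : ℕ) = 0 + 1 from rfl, Bfun]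
        rw [Finset.sum_eq_single (b + 1)]
        · simp [Bfun]
        · intro p hp hne
          simp only [mem_Icc] at hp
          have : b + 1 - p ≠ 0 := by omega
          simp [Bfun, this]
        · simp
      rw [h1]
      have h2 : ∑ c ∈ range (b + 1), Bfun 0 c = 1 := by
        simp only [Bfun]
        rw [Finset.sum_ite_eq' (range (b+1)) 0 (fun _ => (1:ℚ))]
        simp
      rw [h2]
      have : ((b:ℚ) + 1) ≠ 0 := by positivity
      push_cast
      field_simp
      norm_num
  | succ r ih =>
    intro b
    rw [show r + 1 + 1 = (r + 1) + 1 from rfl, Bfun]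
    rw [Finset.mul_sum]
    have h1 : ∀ p ∈ Icc 1 b, (b:ℚ) * ((1 / (p:ℚ)) * Bfun (r+1) (b - p))
        = (1 / (p:ℚ)) * ((r+1) * ∑ c ∈ range (b - p), Bfun r c) + Bfun (r+1) (b - p) := by
      intro p hp
      simp only [mem_Icc] at hp
      have hp0 : (p : ℚ) ≠ 0 := by exact_mod_cast Nat.one_le_iff_ne_zero.mp hp.1
      have hb : (b : ℚ) = ((b - p : ℕ) : ℚ) + (p : ℚ) := by
        have : b - p + p = b := by omega
        exact_mod_cast (by exact_mod_cast congrArg (Nat.cast (R := ℚ)) this.symm)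
      rw [hb, ← ih (b - p)]
      field_simp
    rw [Finset.sum_congr rfl h1, Finset.sum_add_distrib]
    have h2 : ∑ p ∈ Icc 1 b, (1 / (p:ℚ)) * ((r+1) * ∑ c ∈ range (b - p), Bfun r c)
        = (r + 1) * ∑ c ∈ range b, Bfun (r+1) c := by
      rw [← Klem r b, Finset.mul_sum]
      apply Finset.sum_congr rfl
      intro p _; ring
    rw [h2, sum_Icc_one_reflect (fun c => Bfun (r+1) c) b]
    push_cast
    ring

lemma L1 (r : ℕ) (b : ℕ) : (b : ℚ) * Bfun r b = (r : ℚ) * ∑ c ∈ range b, Bfun (r - 1) c := by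
  cases r with
  | zero =>
    simp only [Bfun, Nat.cast_zero, zero_mul]
    cases b <;> simp
  | succ r => exact_mod_cast L1' r b

lemma choose_absorb (a S : ℕ) :
    ((a : ℚ) + 1 - S) * ((a + 1).choose S : ℚ) = ((a : ℚ) + 1) * (a.choose S : ℚ) := by
  rcases le_or_gt S (a + 1) with h | h
  · have h1 := Nat.add_one_mul_choose_eq a S
    have h2 := Nat.choose_succ_right_eq (a + 1) S
    have hnat : (a + 1) * a.choose S = (a+1).choose S * (a + 1 - S) := h1.trans h2
    have hc := congrArg (Nat.cast (R := ℚ)) hnat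
    push_cast [Nat.cast_sub h] at hc
    linarith
  · rw [Nat.choose_eq_zero_of_lt h, Nat.choose_eq_zero_of_lt (by omega)]
    simp

lemma pt (S n b : ℕ) (hb : b ≤ n + 1) :
    ((n : ℚ) + 1 - S) * ((n + 1 - b).choose S : ℚ)
      = ((n : ℚ) + 1) * ((n - b).choose S : ℚ)
        + (b : ℚ) * (((n + 1 - b).choose S : ℚ) - ((n - b).choose S : ℚ)) := by
  rcases eq_or_lt_of_le hb with rfl | hlt
  · have h1 : n + 1 - (n + 1) = 0 := by omega
    have h2 : n - (n + 1) = 0 := by omega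
    rw [h1, h2]
    rcases Nat.eq_zero_or_pos S with rfl | hS
    · push_cast; ring
    · rw [Nat.choose_eq_zero_of_lt hS]; push_cast; ring
  · have hble : b ≤ n := by omega
    have h1 : n + 1 - b = (n - b) + 1 := by omega
    rw [h1]
    have habs := choose_absorb (n - b) S
    have hbc : (b : ℚ) = (n : ℚ) - ((n - b : ℕ) : ℚ) := by
      have : n - b + b = n := by omega
      have := congrArg (Nat.cast (R := ℚ)) this
      push_cast at this
      linarith
    rw [hbc]
    have hnb : ((n - b : ℕ) : ℚ) = (n : ℚ) - (b : ℚ) := by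
      have : n - b + b = n := by omega
      have := congrArg (Nat.cast (R := ℚ)) this
      push_cast at this
      linarith
    nlinarith [habs, hnb]

lemma Trec (S n r : ℕ) :
    ((n : ℚ) + 1 - S) * ∑ b ∈ range (n + 2), Bfun r b * ((n + 1 - b).choose S : ℚ)
      = ((n : ℚ) + 1) * (∑ b ∈ range (n + 1), Bfun r b * ((n - b).choose S : ℚ))
        + (r : ℚ) * ∑ b ∈ range (n + 1), Bfun (r - 1) b * ((n - b).choose S : ℚ) := by
  set f : ℕ → ℚ := fun b => ((n + 1 - b).choose S : ℚ) with hf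
  set G : ℕ → ℚ := fun b => ∑ c ∈ range b, Bfun (r - 1) c with hG
  have hfsucc : ∀ b : ℕ, f (b + 1) = ((n - b).choose S : ℚ) := by
    intro b; simp only [hf, Nat.succ_sub_succ]
  -- pointwise expansion
  have step1 : ((n : ℚ) + 1 - S) * ∑ b ∈ range (n + 2), Bfun r b * f b
      = ((n : ℚ) + 1) * (∑ b ∈ range (n + 2), Bfun r b * f (b + 1))
        + ∑ b ∈ range (n + 2), (b : ℚ) * Bfun r b * (f b - f (b + 1)) := by
    rw [Finset.mul_sum, Finset.mul_sum, ← Finset.sum_add_distrib]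
    apply Finset.sum_congr rfl
    intro b hb
    simp only [mem_range] at hb
    have := pt S n b (by omega)
    rw [hfsucc b]
    simp only [hf]
    linear_combination Bfun r b * this
  -- second piece via L1 and Abel
  have step2 : ∑ b ∈ range (n + 2), (b : ℚ) * Bfun r b * (f b - f (b + 1))
      = (r : ℚ) * ∑ b ∈ range (n + 2), (G (b + 1) - G b) * f (b + 1)
        - (r : ℚ) * G (n + 2) * f (n + 2) := by
    have habel : ∀ b : ℕ, G b * (f b - f (b + 1))
        = (G (b + 1) - G b) * f (b + 1) + (G b * f b - G (b + 1) * f (b + 1)) := by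
      intro b; ring
    have h1 : ∀ b ∈ range (n + 2), (b : ℚ) * Bfun r b * (f b - f (b + 1))
        = (r : ℚ) * (G b * (f b - f (b + 1))) := by
      intro b _
      rw [show (b : ℚ) * Bfun r b * (f b - f (b+1)) = ((b:ℚ) * Bfun r b) * (f b - f (b+1)) from rfl,
        L1 r b]
      ring
    rw [Finset.sum_congr rfl h1, ← Finset.mul_sum]
    have h2 : ∑ b ∈ range (n + 2), G b * (f b - f (b + 1))
        = ∑ b ∈ range (n + 2), ((G (b + 1) - G b) * f (b + 1))
          + (G 0 * f 0 - G (n + 2) * f (n + 2)) := by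
      rw [← Finset.sum_range_sub' (fun b => G b * f b) (n + 2), ← Finset.sum_add_distrib]
      exact Finset.sum_congr rfl fun b _ => habel b
    rw [h2]
    have : G 0 = 0 := by simp [hG]
    rw [this]
    ring
  have hGB : ∀ b : ℕ, G (b + 1) - G b = Bfun (r - 1) b := by
    intro b; simp only [hG, Finset.sum_range_succ]; ring
  -- split top terms
  have split1 : ∑ b ∈ range (n + 2), Bfun r b * f (b + 1)
      = (∑ b ∈ range (n + 1), Bfun r b * ((n - b).choose S : ℚ))
        + Bfun r (n + 1) * f (n + 2) := by
    rw [Finset.sum_range_succ]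
    congr 1
    exact Finset.sum_congr rfl fun b _ => by rw [hfsucc b]
  have split2 : ∑ b ∈ range (n + 2), (G (b + 1) - G b) * f (b + 1)
      = (∑ b ∈ range (n + 1), Bfun (r - 1) b * ((n - b).choose S : ℚ))
        + Bfun (r - 1) (n + 1) * f (n + 2) := by
    rw [Finset.sum_range_succ]
    congr 1
    · exact Finset.sum_congr rfl fun b _ => by rw [hfsucc b, hGB b]
    · rw [hGB]
  rw [step1, step2, split1, split2]
  -- remaining boundary terms cancel using L1 at b = n+1 and f (n+2) = C(0,S)
  have hL1top : ((n : ℚ) + 1) * Bfun r (n + 1) = (r : ℚ) * G (n + 1) := by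
    have := L1 r (n + 1)
    push_cast at this ⊢
    simpa only [hG] using this
  have hGsucc : G (n + 2) = G (n + 1) + Bfun (r - 1) (n + 1) := by
    simp [hG, Finset.sum_range_succ]
  rw [hGsucc]
  linear_combination f (n + 2) * hL1top

lemma st_diag (S k : ℕ) : rStirlingFirst (S + 1) (S + 1) k = if k = S + 1 then 1 else 0 := by
  simp only [rStirlingFirst]
  simp

lemma st_rec (R n k : ℕ) (h : R ≤ n) :
    rStirlingFirst R (n + 1) (k + 1)
      = n * rStirlingFirst R n (k + 1) + rStirlingFirst R n k := by
  simp only [rStirlingFirst]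
  rw [if_neg (by omega), if_neg (by omega)]

lemma st_zero (R : ℕ) : ∀ n k, k < R → rStirlingFirst R n k = 0 := by
  intro n
  induction n with
  | zero =>
    intro k hk
    simp only [rStirlingFirst]
    rcases Nat.eq_zero_or_pos R with rfl | h
    · omega
    · rw [if_neg (by omega)]
  | succ n ih =>
    intro k hk
    simp only [rStirlingFirst]
    rcases lt_trichotomy (n + 1) R with h | h | h
    · rw [if_pos h]
    · rw [if_neg (by omega), if_pos h, if_neg (by omega)]
    · rw [if_neg (by omega), if_neg (by omega)]
      cases k with
      | zero => rfl
      | succ k' =>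
        show n * rStirlingFirst R n (k' + 1) + rStirlingFirst R n k' = 0
        rw [ih (k' + 1) (by omega), ih k' (by omega)]; ring

lemma key (S : ℕ) : ∀ n, S ≤ n → ∀ r : ℕ,
    ∑ b ∈ Finset.range (n + 1), Bfun r b * ((n - b).choose S : ℚ)
      = (r.factorial : ℚ) / ((n - S).factorial : ℚ)
          * (rStirlingFirst (S + 1) (n + 1) (r + S + 1) : ℚ) := by
  intro n hn
  induction n, hn using Nat.le_induction with
  | base =>
    intro r
    have hL : ∑ b ∈ Finset.range (S + 1), Bfun r b * ((S - b).choose S : ℚ) = Bfun r 0 := by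
      rw [Finset.sum_eq_single 0]
      · simp
      · intro b hb hb0
        simp only [mem_range] at hb
        rw [Nat.choose_eq_zero_of_lt (by omega)]
        simp
      · simp
    rw [hL, Bfun_zero, st_diag]
    rcases Nat.eq_zero_or_pos r with rfl | hr
    · simp
    · rw [if_neg (by omega), if_neg (by omega)]
      simp
  | succ n hn ih =>
    intro r
    have trec := Trec S n r
    rw [ih r] at trec
    -- second summand
    have h2 : (r : ℚ) * ∑ b ∈ range (n + 1), Bfun (r - 1) b * ((n - b).choose S : ℚ)
        = (r.factorial : ℚ) / ((n - S).factorial : ℚ)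
            * (rStirlingFirst (S + 1) (n + 1) (r + S) : ℚ) := by
      cases r with
      | zero =>
        rw [st_zero (S + 1) (n + 1) (0 + S) (by omega)]
        simp
      | succ r' =>
        rw [show r' + 1 - 1 = r' from rfl, ih r']
        rw [show r' + S + 1 = r' + 1 + S from by omega]
        push_cast [Nat.factorial_succ]
        ring
    rw [h2] at trec
    have hst := st_rec (S + 1) (n + 1) (r + S) (by omega)
    have hfac : ((n + 1 - S).factorial : ℚ) = ((n : ℚ) + 1 - S) * ((n - S).factorial : ℚ) := by
      have h1 : n + 1 - S = (n - S) + 1 := by omega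
      rw [h1, Nat.factorial_succ]
      have : ((n - S + 1 : ℕ) : ℚ) = (n : ℚ) + 1 - S := by
        push_cast [Nat.cast_sub hn]; ring
      push_cast
      rw [Nat.cast_sub hn]
      ring
    have hne : ((n : ℚ) + 1 - S) ≠ 0 := by
      have : ((n : ℚ)) ≥ S := by exact_mod_cast hn
      intro h; nlinarith
    have hfne : ((n - S).factorial : ℚ) ≠ 0 := by
      exact_mod_cast Nat.factorial_ne_zero _
    have hfacne : ((n + 1 - S).factorial : ℚ) ≠ 0 := by
      exact_mod_cast Nat.factorial_ne_zero _
    rw [div_mul_eq_mul_div, eq_div_iff hfacne]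
    rw [hfac, hst]
    push_cast
    field_simp [hfne] at trec
    linear_combination trec

lemma A1' (a : ℕ) : ∀ N b : ℕ,
    ∑ j ∈ Icc a N, j.choose a * (N - j).choose b = (N + 1).choose (a + b + 1) := by
  intro N
  induction N with
  | zero =>
    intro b
    rcases Nat.eq_zero_or_pos a with rfl | ha
    · simp [Icc_self]
      cases b <;> simp [Nat.choose]
    · rw [Finset.Icc_eq_empty (by omega)]
      rw [Nat.choose_eq_zero_of_lt (by omega)]
      simp
  | succ N ihN =>
    intro b
    rcases le_or_gt a (N + 1) with ha | ha
    · rw [Finset.sum_Icc_succ_top ha]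
      cases b with
      | zero =>
        simp only [Nat.choose_zero_right, mul_one, Nat.add_zero]
        have h := Nat.sum_Icc_choose (N + 1) a
        rw [Finset.sum_Icc_succ_top ha] at h
        omega
      | succ b' =>
        have hlast : (N + 1).choose a * (N + 1 - (N + 1)).choose (b' + 1) = 0 := by
          simp [Nat.sub_self]
        rw [hlast, add_zero]
        have hsplit : ∀ j ∈ Icc a N,
            j.choose a * (N + 1 - j).choose (b' + 1)
              = j.choose a * (N - j).choose b' + j.choose a * (N - j).choose (b' + 1) := by
          intro j hj
          simp only [mem_Icc] at hj
          have : N + 1 - j = (N - j) + 1 := by omega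
          rw [this, Nat.choose_succ_succ, Nat.mul_add]
        rw [Finset.sum_congr rfl hsplit, Finset.sum_add_distrib, ihN b', ihN (b' + 1),
          show a + (b' + 1) + 1 = (a + b' + 1) + 1 from by omega]
        exact (Nat.choose_succ_succ (N + 1) (a + b' + 1)).symm
    · rw [Finset.Icc_eq_empty (by omega), Nat.choose_eq_zero_of_lt (by omega)]
      simp

lemma A1 (Mv b c : ℕ) (h : 1 ≤ Mv) :
    ∑ x ∈ Icc Mv c, (x - 1).choose (Mv - 1) * (c - x).choose b = c.choose (Mv + b) := by
  rcases lt_or_ge c Mv with hc | hc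
  · rw [Finset.Icc_eq_empty (by omega), Nat.choose_eq_zero_of_lt (by omega)]
    simp
  · have hmap : Icc Mv c = (Icc (Mv - 1) (c - 1)).map (addRightEmbedding 1) := by
      rw [Finset.map_add_right_Icc]
      congr 1 <;> omega
    rw [hmap, Finset.sum_map]
    simp only [addRightEmbedding_apply]
    have hcongr : ∀ j ∈ Icc (Mv - 1) (c - 1),
        (j + 1 - 1).choose (Mv - 1) * (c - (j + 1)).choose b
          = j.choose (Mv - 1) * ((c - 1) - j).choose b := by
      intro j hj
      rw [show j + 1 - 1 = j from by omega, show c - (j + 1) = c - 1 - j from by omega]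
    rw [Finset.sum_congr rfl hcongr, A1' (Mv - 1) (c - 1) b,
      show c - 1 + 1 = c from by omega, show Mv - 1 + b + 1 = Mv + b from by omega]

lemma sum_piFinset_cons {k : ℕ} (s : Fin (k + 1) → Finset ℕ) (f : (Fin (k + 1) → ℕ) → ℚ) :
    ∑ m ∈ Fintype.piFinset s, f m =
      ∑ x ∈ s 0, ∑ q ∈ Fintype.piFinset (fun i : Fin k => s i.succ), f (Fin.cons x q) := by
  rw [← Finset.sum_product']
  apply Finset.sum_nbij' (i := fun m => (m 0, Fin.tail m)) (j := fun z => Fin.cons z.1 z.2)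
  · intro m hm
    simp only [Fintype.mem_piFinset] at hm
    simp only [Finset.mem_product, Fintype.mem_piFinset]
    exact ⟨hm 0, fun i => hm i.succ⟩
  · intro z hz
    simp only [Finset.mem_product, Fintype.mem_piFinset] at hz
    simp only [Fintype.mem_piFinset]
    intro i
    induction i using Fin.cases with
    | zero => simpa using hz.1
    | succ j => simpa using hz.2 j
  · intro m hm
    exact Fin.cons_self_tail m
  · intro z hz
    simp
  · intro m hm
    rw [Fin.cons_self_tail]

lemma Amc (n : ℕ) : ∀ (k : ℕ) (M : Fin k → ℕ), (∀ i, 1 ≤ M i) → ∀ c, c ≤ n →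
    ∑ m ∈ (Fintype.piFinset fun i => Finset.Icc (M i) n) with (∑ i, m i ≤ c),
      ∏ i, (((m i) - 1).choose (M i - 1) : ℚ) = (c.choose (∑ i, M i) : ℚ) := by
  intro k
  induction k with
  | zero =>
    intro M hM c hc
    simp
  | succ k ih =>
    intro M hM c hc
    rw [Finset.sum_filter, sum_piFinset_cons]
    have hsummand : ∀ x ∈ Finset.Icc (M 0) n,
        (∑ q ∈ Fintype.piFinset (fun i : Fin k => Finset.Icc (M i.succ) n),
          (if (∑ i, (Fin.cons x q : Fin (k+1) → ℕ) i) ≤ c then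
            ∏ i, (((Fin.cons x q : Fin (k+1) → ℕ) i - 1).choose (M i - 1) : ℚ) else 0))
        = ((x - 1).choose (M 0 - 1) : ℚ) *
            (if x ≤ c then (((c - x).choose (∑ i : Fin k, M i.succ) : ℕ) : ℚ) else 0) := by
      intro x hx
      have hpt : ∀ q ∈ Fintype.piFinset (fun i : Fin k => Finset.Icc (M i.succ) n),
          (if (∑ i, (Fin.cons x q : Fin (k+1) → ℕ) i) ≤ c then
            ∏ i, (((Fin.cons x q : Fin (k+1) → ℕ) i - 1).choose (M i - 1) : ℚ) else 0)
          = ((x - 1).choose (M 0 - 1) : ℚ) *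
              (if x + ∑ i, q i ≤ c then ∏ i, ((q i - 1).choose (M i.succ - 1) : ℚ) else 0) := by
        intro q _
        rw [Fin.sum_univ_succ, Fin.prod_univ_succ]
        simp only [Fin.cons_zero, Fin.cons_succ]
        rw [mul_ite, mul_zero]
      rw [Finset.sum_congr rfl hpt, ← Finset.mul_sum]
      congr 1
      by_cases hxc : x ≤ c
      · rw [if_pos hxc]
        have hih := ih (fun i => M i.succ) (fun i => hM i.succ) (c - x) (by omega)
        rw [Finset.sum_filter] at hih
        rw [← hih]
        apply Finset.sum_congr rfl
        intro q _
        exact if_congr (by omega) rfl rfl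
      · rw [if_neg hxc]
        apply Finset.sum_eq_zero
        intro q _
        rw [if_neg (by omega)]
    rw [Finset.sum_congr rfl hsummand]
    have hfilter : ∀ x ∈ Finset.Icc (M 0) n,
        ((x - 1).choose (M 0 - 1) : ℚ) *
            (if x ≤ c then (((c - x).choose (∑ i : Fin k, M i.succ) : ℕ) : ℚ) else 0)
        = (if x ≤ c then (((x - 1).choose (M 0 - 1) * (c - x).choose (∑ i : Fin k, M i.succ) : ℕ) : ℚ) else 0) := by
      intro x _
      rw [mul_ite, mul_zero]
      congr 1
      push_cast
      ring
    rw [Finset.sum_congr rfl hfilter, ← Finset.sum_filter]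
    have hIcc : {x ∈ Finset.Icc (M 0) n | x ≤ c} = Finset.Icc (M 0) c := by
      ext z
      simp only [Finset.mem_filter, Finset.mem_Icc]
      omega
    rw [hIcc, ← Nat.cast_sum, A1 (M 0) (∑ i : Fin k, M i.succ) c (hM 0),
      Fin.sum_univ_succ]

lemma Bp_eq (n : ℕ) : ∀ (r b : ℕ), b ≤ n →
    ∑ p ∈ (Fintype.piFinset fun _ : Fin r => Finset.Icc 1 n) with (∑ j, p j = b),
      ∏ j, (1 : ℚ) / ((p j : ℕ) : ℚ) = Bfun r b := by
  intro r
  induction r with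
  | zero =>
    intro b hb
    cases b <;> simp [Bfun, eq_comm]
  | succ r ih =>
    intro b hb
    rw [Finset.sum_filter, sum_piFinset_cons]
    have hsummand : ∀ x ∈ Finset.Icc 1 n,
        (∑ q ∈ Fintype.piFinset (fun _ : Fin r => Finset.Icc 1 n),
          (if (∑ j, (Fin.cons x q : Fin (r+1) → ℕ) j) = b then
            ∏ j, (1 : ℚ) / (((Fin.cons x q : Fin (r+1) → ℕ) j : ℕ) : ℚ) else 0))
        = (1 / (x : ℚ)) * (if x ≤ b then Bfun r (b - x) else 0) := by
      intro x hx
      have hpt : ∀ q ∈ Fintype.piFinset (fun _ : Fin r => Finset.Icc 1 n),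
          (if (∑ j, (Fin.cons x q : Fin (r+1) → ℕ) j) = b then
            ∏ j, (1 : ℚ) / (((Fin.cons x q : Fin (r+1) → ℕ) j : ℕ) : ℚ) else 0)
          = (1 / (x : ℚ)) * (if x + ∑ j, q j = b then ∏ j, (1 : ℚ) / ((q j : ℕ) : ℚ) else 0) := by
        intro q _
        rw [Fin.sum_univ_succ, Fin.prod_univ_succ]
        simp only [Fin.cons_zero, Fin.cons_succ]
        rw [mul_ite, mul_zero]
      rw [Finset.sum_congr rfl hpt, ← Finset.mul_sum]
      congr 1
      by_cases hxb : x ≤ b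
      · rw [if_pos hxb]
        have hih := ih (b - x) (by omega)
        rw [Finset.sum_filter] at hih
        rw [← hih]
        apply Finset.sum_congr rfl
        intro q _
        exact if_congr (by omega) rfl rfl
      · rw [if_neg hxb]
        apply Finset.sum_eq_zero
        intro q _
        rw [if_neg (by omega)]
    rw [Finset.sum_congr rfl hsummand]
    have hpull : ∀ x ∈ Finset.Icc 1 n,
        (1 / (x : ℚ)) * (if x ≤ b then Bfun r (b - x) else 0)
          = (if x ≤ b then (1 / (x : ℚ)) * Bfun r (b - x) else 0) := by
      intro x _
      rw [mul_ite, mul_zero]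
    rw [Finset.sum_congr rfl hpull, ← Finset.sum_filter]
    have hIcc : {x ∈ Finset.Icc 1 n | x ≤ b} = Finset.Icc 1 b := by
      ext z
      simp only [Finset.mem_filter, Finset.mem_Icc]
      omega
    rw [hIcc]
    rfl


/-- Lemma B.8 ('sum_prod_comb_stirstg'). For `M : Fin k → ℕ` with
`M_i ≥ 1` and `n ≥ ∑ M_i`: the sum over pairs `(m, p)` with `m_i ≥ M_i`, `p_j ≥ 1`
and `∑ m + ∑ p ≤ n` of `∏_i C(m_i - 1, M_i - 1) · ∏_j 1/p_j` equals
`r!/(n - |M|)! · c_{|M|+1}(n+1, r+|M|+1)`. -/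
theorem stmt_13 (k r n : ℕ) (M : Fin k → ℕ) (hM : ∀ i, 1 ≤ M i)
    (hn : ∑ i, M i ≤ n) :
    ∑ mp ∈ ((Fintype.piFinset fun i : Fin k => Finset.Icc (M i) n) ×ˢ
          (Fintype.piFinset fun _ : Fin r => Finset.Icc 1 n)).filter
        (fun mp => (∑ i, mp.1 i) + ∑ j, mp.2 j ≤ n),
      (∏ i : Fin k, ((mp.1 i - 1).choose (M i - 1) : ℚ)) *
        ∏ j : Fin r, (1 : ℚ) / (mp.2 j : ℚ) =
      (r.factorial : ℚ) / ((n - ∑ i, M i).factorial : ℚ) *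
        (rStirlingFirst ((∑ i, M i) + 1) (n + 1) (r + (∑ i, M i) + 1) : ℚ) := by
  set S := ∑ i, M i with hS
  rw [Finset.sum_filter, Finset.sum_product]
  rw [Finset.sum_comm]
  -- inner m-sum
  have hinner : ∀ p ∈ (Fintype.piFinset fun _ : Fin r => Finset.Icc 1 n),
      (∑ m ∈ (Fintype.piFinset fun i : Fin k => Finset.Icc (M i) n),
        (if (∑ i, m i) + ∑ j, p j ≤ n then
          (∏ i : Fin k, ((m i - 1).choose (M i - 1) : ℚ)) * ∏ j : Fin r, (1 : ℚ) / (p j : ℚ)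
         else 0))
      = (if (∑ j, p j) ≤ n then (((n - ∑ j, p j).choose S : ℕ) : ℚ) else 0)
          * ∏ j : Fin r, (1 : ℚ) / (p j : ℚ) := by
    intro p _
    have h1 : ∀ m ∈ (Fintype.piFinset fun i : Fin k => Finset.Icc (M i) n),
        (if (∑ i, m i) + ∑ j, p j ≤ n then
          (∏ i : Fin k, ((m i - 1).choose (M i - 1) : ℚ)) * ∏ j : Fin r, (1 : ℚ) / (p j : ℚ)
         else 0)
        = (if (∑ i, m i) + ∑ j, p j ≤ n then
            (∏ i : Fin k, ((m i - 1).choose (M i - 1) : ℚ)) else 0)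
            * ∏ j : Fin r, (1 : ℚ) / (p j : ℚ) := by
      intro m _
      rw [ite_mul, zero_mul]
    rw [Finset.sum_congr rfl h1, ← Finset.sum_mul]
    congr 1
    by_cases hpn : (∑ j, p j) ≤ n
    · rw [if_pos hpn]
      have hamc := Amc n k M hM (n - ∑ j, p j) (by omega)
      rw [Finset.sum_filter] at hamc
      rw [← hamc]
      apply Finset.sum_congr rfl
      intro m _
      exact if_congr (by omega) rfl rfl
    · rw [if_neg hpn]
      apply Finset.sum_eq_zero
      intro m _
      rw [if_neg (by omega)]
  rw [Finset.sum_congr rfl hinner]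
  -- turn into filtered sum over p
  have h2 : ∀ p ∈ (Fintype.piFinset fun _ : Fin r => Finset.Icc 1 n),
      (if (∑ j, p j) ≤ n then (((n - ∑ j, p j).choose S : ℕ) : ℚ) else 0)
          * ∏ j : Fin r, (1 : ℚ) / (p j : ℚ)
      = (if (∑ j, p j) ≤ n then
          (((n - ∑ j, p j).choose S : ℕ) : ℚ) * ∏ j : Fin r, (1 : ℚ) / (p j : ℚ) else 0) := by
    intro p _
    rw [ite_mul, zero_mul]
  rw [Finset.sum_congr rfl h2, ← Finset.sum_filter]
  -- group by total
  have hmaps : ∀ p ∈ {p ∈ (Fintype.piFinset fun _ : Fin r => Finset.Icc 1 n) |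
      (∑ j, p j) ≤ n}, (∑ j, p j) ∈ Finset.range (n + 1) := by
    intro p hp
    simp only [Finset.mem_filter] at hp
    simp only [Finset.mem_range]
    omega
  rw [← Finset.sum_fiberwise_of_maps_to hmaps]
  -- evaluate each fiber
  have hfiber : ∀ b ∈ Finset.range (n + 1),
      (∑ p ∈ {p ∈ {p ∈ (Fintype.piFinset fun _ : Fin r => Finset.Icc 1 n) |
          (∑ j, p j) ≤ n} | (∑ j, p j) = b},
        (((n - ∑ j, p j).choose S : ℕ) : ℚ) * ∏ j : Fin r, (1 : ℚ) / (p j : ℚ))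
      = Bfun r b * (((n - b).choose S : ℕ) : ℚ) := by
    intro b hb
    simp only [Finset.mem_range] at hb
    rw [Finset.filter_filter]
    have hfeq : ∀ p : Fin r → ℕ, ((∑ j, p j) ≤ n ∧ (∑ j, p j) = b) ↔ ((∑ j, p j) = b) := by
      intro p; constructor
      · exact fun h => h.2
      · intro h; exact ⟨by omega, h⟩
    rw [Finset.filter_congr (fun p _ => hfeq p)]
    have hterm : ∀ p ∈ {p ∈ (Fintype.piFinset fun _ : Fin r => Finset.Icc 1 n) |
        (∑ j, p j) = b},
        (((n - ∑ j, p j).choose S : ℕ) : ℚ) * ∏ j : Fin r, (1 : ℚ) / (p j : ℚ)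
        = (((n - b).choose S : ℕ) : ℚ) * ∏ j : Fin r, (1 : ℚ) / (p j : ℚ) := by
      intro p hp
      simp only [Finset.mem_filter] at hp
      rw [hp.2]
    rw [Finset.sum_congr rfl hterm, ← Finset.mul_sum, Bp_eq n r b (by omega)]
    ring
  rw [Finset.sum_congr rfl hfiber]
  exact key S n hn r
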